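/- For a ≡ 4 (mod 6), there exists a family of (a² − 2a + 4)/6 triples on the set {1,...,a} such that the pairs not covered by any of these triples form a set of (a−2)/2 pairwise disjoint pairs. -/

import Mathlib

open Finset

/-- `T` is a family of 3-element subsets of `A`. -/
def IsTripleFamily {α : Type*} [DecidableEq α] (A : Finset α) (T : Finset (Finset α)) : Prop :=
  ∀ t ∈ T, t ⊆ A ∧ t.card = 3

/-- The 2-element subsets of `A` not contained in any member of `T`. -/
def uncoveredPairs {α : Type*} [DecidableEq α] (A : Finset α) (T : Finset (Finset α)) :
    Finset (Finset α) :=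
  (A.powersetCard 2).filter fun p => ∀ t ∈ T, ¬ p ⊆ t

/-- The weight of a triple family: number of triples plus half the number of uncovered pairs. -/
def weight {α : Type*} [DecidableEq α] (A : Finset α) (T : Finset (Finset α)) : ℚ :=
  T.card + (uncoveredPairs A T).card / 2

/-- `C_*(a)`: the minimum weight of a triple family on an `a`-element set
(computed as half the minimum of the doubled weights, which are natural numbers). -/
noncomputable def Cstar2 (a : ℕ) : ℕ :=
  sInf {n : ℕ | ∃ T : Finset (Finset ℕ), IsTripleFamily (Finset.range a) T ∧
      2 * T.card + (uncoveredPairs (Finset.range a) T).card = n}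

noncomputable def Cstar (a : ℕ) : ℚ := (Cstar2 a : ℚ) / 2

/-- `T` is a covering of the pairs of `A` by triples. -/
def IsCover {α : Type*} [DecidableEq α] (A : Finset α) (T : Finset (Finset α)) : Prop :=
  IsTripleFamily A T ∧ ∀ p ⊆ A, p.card = 2 → ∃ t ∈ T, p ⊆ t

/-- `C(a) = C(a,3,2)`: the minimum size of a covering of pairs by triples on `a` elements. -/
noncomputable def coverNum (a : ℕ) : ℕ :=
  sInf {n | ∃ T : Finset (Finset ℕ), IsCover (Finset.range a) T ∧ T.card = n}

/-- An `(A,B)`-system: a family of 4-element subsets of `A ∪ B` covering every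
3-element subset with at least two elements in `A`. -/
def IsABSystem {α : Type*} [DecidableEq α] (A B : Finset α) (Q : Finset (Finset α)) : Prop :=
  (∀ q ∈ Q, q ⊆ A ∪ B ∧ q.card = 4) ∧
  ∀ T ⊆ A ∪ B, T.card = 3 → 2 ≤ (T ∩ A).card → ∃ q ∈ Q, T ⊆ q

/-- `f(a,b)`: the minimum size of an `(A,B)`-system with `|A| = a`, `|B| = b`. -/
noncomputable def fAB (a b : ℕ) : ℕ :=
  sInf {n | ∃ Q : Finset (Finset ℕ),
    IsABSystem (Finset.range a) (Finset.Ico a (a + b)) Q ∧ Q.card = n}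


namespace Packing46

/-- Structure witnessing: `K_{6k}` decomposes into 5 perfect matchings `M 0 .. M 4`
(each of size `3k`) together with a family of triangles `Δ` (of size `6k(k-1)`),
where the pairs of the matching `M 4` are covered by nothing else. -/
structure DStruct (k : ℕ) (M : Fin 5 → Finset (Finset ℕ)) (Δ : Finset (Finset ℕ)) : Prop where
  match_mem : ∀ i : Fin 5, ∀ e ∈ M i, e ⊆ Finset.range (6*k) ∧ e.card = 2
  match_span : ∀ i : Fin 5, ∀ v, v < 6*k → ∃ e ∈ M i, v ∈ e
  match_disj : ∀ i : Fin 5, ∀ e ∈ M i, ∀ f ∈ M i, e ≠ f → Disjoint e f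
  match_card : ∀ i : Fin 5, (M i).card = 3*k
  tri_mem : ∀ t ∈ Δ, t ⊆ Finset.range (6*k) ∧ t.card = 3
  tri_card : Δ.card = 6*k*(k-1)
  cover : ∀ v, v < 6*k → ∀ w, w < 6*k → v ≠ w →
    (∃ i : Fin 5, ∃ e ∈ M i, v ∈ e ∧ w ∈ e) ∨ (∃ t ∈ Δ, v ∈ t ∧ w ∈ t)
  purity : ∀ e ∈ M 4, (∀ t ∈ Δ, ¬ (e ⊆ t)) ∧ (∀ i : Fin 5, i ≠ 4 → e ∉ M i)

def GoodD (k : ℕ) : Prop := ∃ M Δ, DStruct k M Δ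

/-- A triangle family on `range (P*u)` covering all pairs with distinct residues mod `u`,
every triangle transversal to the residue classes (a 3-GDD with `u` groups of size `P`). -/
structure GDDStruct (P u : ℕ) (Δ : Finset (Finset ℕ)) : Prop where
  mem : ∀ t ∈ Δ, t ⊆ Finset.range (P*u) ∧ t.card = 3
  trans : ∀ t ∈ Δ, ∀ v ∈ t, ∀ w ∈ t, v ≠ w → v % u ≠ w % u
  cover : ∀ v, v < P*u → ∀ w, w < P*u → v % u ≠ w % u → ∃ t ∈ Δ, v ∈ t ∧ w ∈ t

/- base cases -/
def M1 : Fin 5 → Finset (Finset ℕ) :=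
  ![{{0,1},{2,3},{4,5}}, {{0,2},{1,4},{3,5}}, {{0,3},{1,5},{2,4}},
    {{0,4},{1,3},{2,5}}, {{0,5},{1,2},{3,4}}]

set_option synthInstance.maxSize 4000 in
set_option synthInstance.maxHeartbeats 4000000 in
lemma goodD1 : DStruct 1 M1 ∅ := by
  refine ⟨?_, ?_, ?_, ?_, ?_, ?_, ?_, ?_⟩ <;> decide

def M2 : Fin 5 → Finset (Finset ℕ) :=
  ![{{0,6},{1,7},{2,4},{3,9},{5,10},{8,11}},
    {{0,3},{1,6},{2,10},{4,8},{5,11},{7,9}},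
    {{0,8},{1,5},{2,3},{4,7},{6,11},{9,10}},
    {{0,10},{1,11},{2,9},{3,8},{4,5},{6,7}},
    {{0,4},{1,8},{2,11},{3,5},{6,9},{7,10}}]

def D2 : Finset (Finset ℕ) :=
  {{0,1,2},{0,5,7},{0,9,11},{1,3,10},{1,4,9},{2,5,6},
   {2,7,8},{3,4,6},{3,7,11},{4,10,11},{5,8,9},{6,8,10}}

set_option synthInstance.maxSize 4000 in
set_option synthInstance.maxHeartbeats 4000000 in
set_option maxHeartbeats 4000000 in
lemma goodD2 : DStruct 2 M2 D2 := by
  refine ⟨?_, ?_, ?_, ?_, ?_, ?_, ?_, ?_⟩ <;> decide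

/-- the 3-GDD with 4 groups of size 2 : groups are residues mod 4 on `range 8`. -/
def G8 : Finset (Finset ℕ) :=
  {{0,1,3},{1,2,4},{2,3,5},{3,4,6},{4,5,7},{5,6,0},{6,7,1},{7,0,2}}

lemma gdd8 : GDDStruct 2 4 G8 := by
  refine ⟨?_, ?_, ?_⟩ <;> decide

lemma gdd8_card : G8.card = 8 := by decide

/- encoding helpers -/
lemma encu_lt {u i x c : ℕ} (hx : x < u) (hi : i < c) : i*u + x < c*u := by
  calc i*u + x < i*u + u := by omega
  _ = (i+1)*u := by ring
  _ ≤ c*u := Nat.mul_le_mul_right u (by omega)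

lemma encu_mod {u i x : ℕ} (hx : x < u) : (i*u + x) % u = x := by
  rw [add_comm, Nat.add_mul_mod_self_right, Nat.mod_eq_of_lt hx]

lemma encu_div {u i x : ℕ} (hx : x < u) : (i*u + x) / u = i := by
  rw [add_comm, Nat.add_mul_div_right _ _ (by omega : 0 < u),
    Nat.div_eq_of_lt hx, zero_add]

lemma encu_eq {u : ℕ} (v : ℕ) (hu : 0 < u) : (v/u)*u + v%u = v := by
  rw [mul_comm]; exact Nat.div_add_mod v u

lemma encu_inj {u i x j y : ℕ} (hx : x < u) (hy : y < u)
    (h : i*u + x = j*u + y) : i = j ∧ x = y := by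
  have h1 : (i*u+x) % u = (j*u+y) % u := by rw [h]
  have h2 : (i*u+x) / u = (j*u+y) / u := by rw [h]
  rw [encu_mod hx, encu_mod hy] at h1
  rw [encu_div hx, encu_div hy] at h2
  exact ⟨h2, h1⟩

/- half (inverse of 2 mod odd u) -/
lemma half_mul_two {u : ℕ} (hu : Odd u) (a : ℕ) :
    (a * ((u+1)/2) * 2) % u = a % u := by
  obtain ⟨y, rfl⟩ := hu
  have h2 : (2*y+1+1)/2 = y+1 := by omega
  rw [h2, show a*(y+1)*2 = a + a*(2*y+1) by ring, Nat.add_mul_mod_self_right]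

/- Bose GDD construction: 3 rows, u columns(=groups), vertex (row i, col x) = i*u+x -/
def boseT (u i : ℕ) (s : Finset ℕ) : Finset ℕ :=
  s.image (fun x => i*u + x) ∪ {((i+1) % 3)*u + (s.sum id * ((u+1)/2)) % u}

def bose (u : ℕ) : Finset (Finset ℕ) :=
  (((Finset.range u).powersetCard 2) ×ˢ (Finset.range 3)).image
    (fun q => boseT u q.2 q.1)

lemma boseT_pair (u i x y : ℕ) (h : x ≠ y) :
    boseT u i {x,y} =
      {i*u + x, i*u + y, ((i+1) % 3)*u + ((x+y) * ((u+1)/2)) % u} := by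
  rw [boseT, Finset.sum_pair h]
  ext z
  simp [or_assoc]

lemma pair_mem_powersetCard {u x y : ℕ} (hx : x < u) (hy : y < u) (hxy : x ≠ y) :
    ({x,y} : Finset ℕ) ∈ (Finset.range u).powersetCard 2 := by
  rw [Finset.mem_powersetCard]
  constructor
  · intro z hz; simp at hz; rcases hz with rfl | rfl <;> simp [Finset.mem_range, hx, hy]
  · rw [Finset.card_insert_of_notMem (by simp [hxy]), Finset.card_singleton]

/-- the key arithmetic fact for covering pairs between consecutive rows -/
lemma bose_solve {u : ℕ} (hu : Odd u) {xv xw : ℕ} (hxv : xv < u) (hxw : xw < u)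
    (hne : xv ≠ xw) :
    ∃ z, z < u ∧ z ≠ xv ∧ ((xv + z) * ((u+1)/2)) % u = xw := by
  have hu0 : 0 < u := hu.pos
  set h := (u+1)/2 with hh
  have main : ∀ z, (xv + z) % u = (2*xw) % u → ((xv + z) * h) % u = xw := by
    intro z hz
    have e2 : ((xv + z) * h) % u = ((2*xw) * h) % u := Nat.ModEq.mul_right h hz
    have e3 : ((2*xw) * h) % u = xw % u := by
      rw [show 2*xw*h = xw*h*2 by ring]; exact half_mul_two hu xw
    rw [e2, e3, Nat.mod_eq_of_lt hxw]
  refine ⟨(2*xw + (u - xv)) % u, Nat.mod_lt _ hu0, ?_, ?_⟩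
  · intro heq
    have e1 : (xv + (2*xw + (u - xv)) % u) % u = (2*xw) % u := by
      rw [Nat.add_mod_mod, show xv + (2*xw + (u - xv)) = 2*xw + u by omega,
        Nat.add_mod_right]
    have := main _ e1
    rw [heq] at this
    have e4 : ((xv + xv) * h) % u = xv % u := by
      rw [show (xv+xv)*h = xv*h*2 by ring]; exact half_mul_two hu xv
    rw [e4, Nat.mod_eq_of_lt hxv] at this
    exact hne this
  · apply main
    rw [Nat.add_mod_mod, show xv + (2*xw + (u - xv)) = 2*xw + u by omega,
      Nat.add_mod_right]

lemma bose_gdd {u : ℕ} (hu : Odd u) : GDDStruct 3 u (bose u) := by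
  have hu0 : 0 < u := hu.pos
  have hmemT : ∀ s ∈ (Finset.range u).powersetCard 2, ∀ i ∈ Finset.range 3,
      ∃ x y, x < u ∧ y < u ∧ x ≠ y ∧ s = {x,y} ∧
      boseT u i s = {i*u + x, i*u + y, ((i+1) % 3)*u + ((x+y) * ((u+1)/2)) % u} := by
    intro s hs i _
    rw [Finset.mem_powersetCard] at hs
    obtain ⟨x, y, hxy, rfl⟩ := Finset.card_eq_two.1 hs.2
    have hx : x < u := by have := hs.1 (Finset.mem_insert_self x {y}); simpa using this
    have hy : y < u := by
      have := hs.1 (Finset.mem_insert_of_mem (Finset.mem_singleton_self y)); simpa using this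
    exact ⟨x, y, hx, hy, hxy, rfl, boseT_pair u i x y hxy⟩
  constructor
  · -- mem
    intro t ht
    rw [bose, Finset.mem_image] at ht
    obtain ⟨⟨s, i⟩, hq, rfl⟩ := ht
    rw [Finset.mem_product] at hq
    obtain ⟨x, y, hx, hy, hxy, rfl, heq⟩ := hmemT s hq.1 i hq.2
    have hi : i < 3 := by simpa using hq.2
    have hz : ((x+y) * ((u+1)/2)) % u < u := Nat.mod_lt _ hu0
    have hj : (i+1) % 3 < 3 := Nat.mod_lt _ (by omega)
    constructor
    · rw [heq]; intro w hw
      simp only [Finset.mem_insert, Finset.mem_singleton] at hw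
      rw [Finset.mem_range]
      rcases hw with rfl | rfl | rfl
      · exact encu_lt hx hi
      · exact encu_lt hy hi
      · exact encu_lt hz hj
    · rw [heq]
      -- card 3 : the three listed elements are distinct
      have d1 : i*u + x ≠ i*u + y := fun hc => hxy (encu_inj hx hy hc).2
      have hzne : ((x+y) * ((u+1)/2)) % u < u := hz
      have hne3 : (i+1) % 3 ≠ i := by omega
      have d2 : i*u + x ≠ ((i+1) % 3)*u + ((x+y) * ((u+1)/2)) % u :=
        fun hc => hne3 (encu_inj hx hzne hc).1.symm
      have d3 : i*u + y ≠ ((i+1) % 3)*u + ((x+y) * ((u+1)/2)) % u :=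
        fun hc => hne3 (encu_inj hy hzne hc).1.symm
      rw [Finset.card_insert_of_notMem (by simp [d1, d2, hxy]),
        Finset.card_insert_of_notMem (by simp [d3]), Finset.card_singleton]
  · -- trans
    intro t ht v hv w hw hvw
    rw [bose, Finset.mem_image] at ht
    obtain ⟨⟨s, i⟩, hq, rfl⟩ := ht
    rw [Finset.mem_product] at hq
    obtain ⟨x, y, hx, hy, hxy, rfl, heq⟩ := hmemT s hq.1 i hq.2
    rw [heq] at hv hw
    have hz : ((x+y) * ((u+1)/2)) % u < u := Nat.mod_lt _ hu0
    -- the three elements have mod-u values x, y, z', pairwise distinct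
    have hzx : ((x+y) * ((u+1)/2)) % u ≠ x := by
      intro hc
      -- multiply congruence by 2 : x + y ≡ 2 x, so y ≡ x mod u, so y = x
      have : ((x+y) * ((u+1)/2) * 2) % u = (x+y) % u := half_mul_two hu (x+y)
      have h2 : ((x+y) * ((u+1)/2) * 2) % u = (x * 2) % u := by
        rw [show (x+y) * ((u+1)/2) * 2 = ((x+y) * ((u+1)/2)) * 2 by ring]
        have : ((x+y) * ((u+1)/2)) % u = x % u := by rw [hc, Nat.mod_eq_of_lt hx]
        exact Nat.ModEq.mul_right 2 this
      have h3 : (x+y) % u = (x*2) % u := by omega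
      have h4 : (x + y) % u = (x + x) % u := by rw [h3]; congr 1; ring
      have := Nat.ModEq.add_left_cancel' x h4.symm
      rw [Nat.ModEq, Nat.mod_eq_of_lt hx, Nat.mod_eq_of_lt hy] at this
      exact hxy this
    have hzy : ((x+y) * ((u+1)/2)) % u ≠ y := by
      intro hc
      have : ((x+y) * ((u+1)/2) * 2) % u = (x+y) % u := half_mul_two hu (x+y)
      have h2 : ((x+y) * ((u+1)/2) * 2) % u = (y * 2) % u := by
        rw [show (x+y) * ((u+1)/2) * 2 = ((x+y) * ((u+1)/2)) * 2 by ring]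
        have : ((x+y) * ((u+1)/2)) % u = y % u := by rw [hc, Nat.mod_eq_of_lt hy]
        exact Nat.ModEq.mul_right 2 this
      have h3 : (x+y) % u = (y*2) % u := by omega
      have h4 : (y + x) % u = (y + y) % u := by
        rw [show y + x = x + y by ring, h3]; congr 1; ring
      have := Nat.ModEq.add_left_cancel' y h4.symm
      rw [Nat.ModEq, Nat.mod_eq_of_lt hx, Nat.mod_eq_of_lt hy] at this
      exact hxy this.symm
    simp only [Finset.mem_insert, Finset.mem_singleton] at hv hw
    have mx := encu_mod (u := u) (i := i) hx
    have my := encu_mod (u := u) (i := i) hy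
    have mz := encu_mod (u := u) (i := (i+1)%3) hz
    rcases hv with rfl | rfl | rfl <;> rcases hw with rfl | rfl | rfl <;>
      first
        | exact absurd rfl hvw
        | (rw [mx, my]; exact hxy)
        | (rw [my, mx]; exact fun hc => hxy hc.symm)
        | (rw [mx, mz]; exact fun hc => hzx hc.symm)
        | (rw [mz, mx]; exact hzx)
        | (rw [my, mz]; exact fun hc => hzy hc.symm)
        | (rw [mz, my]; exact hzy)
  · -- cover
    intro v hv w hw hne
    have hvu : v % u < u := Nat.mod_lt _ hu0
    have hwu : w % u < u := Nat.mod_lt _ hu0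
    have hvd : v / u < 3 := by
      rw [Nat.div_lt_iff_lt_mul hu0]; exact hv
    have hwd : w / u < 3 := by
      rw [Nat.div_lt_iff_lt_mul hu0]; exact hw
    have hveq : (v/u)*u + v%u = v := encu_eq v hu0
    have hweq : (w/u)*u + w%u = w := encu_eq w hu0
    have hmem_bose : ∀ x y i, x < u → y < u → x ≠ y → i < 3 →
        boseT u i {x,y} ∈ bose u := by
      intro x y i hx hy hxy hi
      rw [bose, Finset.mem_image]
      exact ⟨⟨{x,y}, i⟩, Finset.mem_product.2
        ⟨pair_mem_powersetCard hx hy hxy, Finset.mem_range.2 hi⟩, rfl⟩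
    rcases eq_or_ne (v/u) (w/u) with hdiv | hdiv
    · -- same row
      refine ⟨boseT u (v/u) {v%u, w%u}, hmem_bose _ _ _ hvu hwu hne hvd, ?_⟩
      rw [boseT_pair u _ _ _ hne]
      constructor
      · rw [show (v/u)*u + v%u = v from hveq]; simp
      · rw [show (v/u)*u + w%u = w by rw [hdiv]; exact hweq]; simp
    · -- different rows
      have hdec : ∀ d : ℕ, d < 3 → ∀ e : ℕ, e < 3 → d ≠ e → e = (d+1)%3 ∨ d = (e+1)%3 := by decide
      have hcase : w/u = (v/u + 1) % 3 ∨ v/u = (w/u + 1) % 3 := hdec _ hvd _ hwd hdiv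
      rcases hcase with hc | hc
      · obtain ⟨z, hzu, hzne, hzeq⟩ := bose_solve hu hvu hwu hne
        refine ⟨boseT u (v/u) {v%u, z}, hmem_bose _ _ _ hvu hzu (fun h => hzne h.symm) hvd, ?_⟩
        rw [boseT_pair u _ _ _ (fun h => hzne h.symm)]
        constructor
        · rw [show (v/u)*u + v%u = v from hveq]; simp
        · have : ((v/u + 1) % 3)*u + ((v % u + z) * ((u+1)/2)) % u = w := by
            rw [hzeq, ← hc]; exact hweq
          rw [this]; simp
      · obtain ⟨z, hzu, hzne, hzeq⟩ := bose_solve hu hwu hvu (fun h => hne h.symm)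
        refine ⟨boseT u (w/u) {w%u, z}, hmem_bose _ _ _ hwu hzu (fun h => hzne h.symm) hwd, ?_⟩
        rw [boseT_pair u _ _ _ (fun h => hzne h.symm)]
        constructor
        · have : ((w/u + 1) % 3)*u + ((w % u + z) * ((u+1)/2)) % u = v := by
            rw [hzeq, ← hc]; exact hveq
          rw [this]; simp
        · rw [show (w/u)*u + w%u = w from hweq]; simp



/- cardinality of the Bose construction -/
lemma bose_card {u : ℕ} (hu : Odd u) : (bose u).card = u.choose 2 * 3 := by
  have hu0 : 0 < u := hu.pos
  rw [bose]
  rw [Finset.card_image_of_injOn, Finset.card_product, Finset.card_powersetCard,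
    Finset.card_range, Finset.card_range]
  intro q hq q' hq' heq
  simp only [Finset.mem_coe, Finset.mem_product] at hq hq'
  obtain ⟨s, i⟩ := q
  obtain ⟨s', i'⟩ := q'
  simp only at heq ⊢
  rw [Finset.mem_powersetCard] at *
  obtain ⟨x, y, hxy, rfl⟩ := Finset.card_eq_two.1 hq.1.2
  obtain ⟨x', y', hxy', rfl⟩ := Finset.card_eq_two.1 hq'.1.2
  have hx : x < u := by
    have := hq.1.1 (Finset.mem_insert_self x {y}); simpa using this
  have hy : y < u := by
    have := hq.1.1 (Finset.mem_insert_of_mem (Finset.mem_singleton_self y)); simpa using this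
  have hx' : x' < u := by
    have := hq'.1.1 (Finset.mem_insert_self x' {y'}); simpa using this
  have hy' : y' < u := by
    have := hq'.1.1 (Finset.mem_insert_of_mem (Finset.mem_singleton_self y')); simpa using this
  have hi : i < 3 := by simpa using hq.2
  have hi' : i' < 3 := by simpa using hq'.2
  rw [boseT_pair u i x y hxy, boseT_pair u i' x' y' hxy'] at heq
  set z := ((x+y) * ((u+1)/2)) % u with hz
  set z' := ((x'+y') * ((u+1)/2)) % u with hz'
  have hzu : z < u := Nat.mod_lt _ hu0
  have hzu' : z' < u := Nat.mod_lt _ hu0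
  -- membership transfer
  have hmx : i*u + x ∈ ({i'*u + x', i'*u + y', ((i'+1)%3)*u + z'} : Finset ℕ) := by
    rw [← heq]; simp
  have hmy : i*u + y ∈ ({i'*u + x', i'*u + y', ((i'+1)%3)*u + z'} : Finset ℕ) := by
    rw [← heq]; simp
  simp only [Finset.mem_insert, Finset.mem_singleton] at hmx hmy
  have hii : i = i' := by
    by_contra hne
    have hax : x = z' := by
      rcases hmx with h | h | h
      · exact absurd (encu_inj hx hx' h).1 hne
      · exact absurd (encu_inj hx hy' h).1 hne
      · exact (encu_inj hx hzu' h).2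
    have hay : y = z' := by
      rcases hmy with h | h | h
      · exact absurd (encu_inj hy hx' h).1 hne
      · exact absurd (encu_inj hy hy' h).1 hne
      · exact (encu_inj hy hzu' h).2
    exact hxy (hax.trans hay.symm)
  subst hii
  have hne3 : (i+1) % 3 ≠ i := by omega
  have hax : x = x' ∨ x = y' := by
    rcases hmx with h | h | h
    · exact Or.inl (encu_inj hx hx' h).2
    · exact Or.inr (encu_inj hx hy' h).2
    · exact absurd (encu_inj hx hzu' h).1 hne3.symm
  have hay : y = x' ∨ y = y' := by
    rcases hmy with h | h | h
    · exact Or.inl (encu_inj hy hx' h).2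
    · exact Or.inr (encu_inj hy hy' h).2
    · exact absurd (encu_inj hy hzu' h).1 hne3.symm
  have hset : ({x, y} : Finset ℕ) = {x', y'} := by
    apply Finset.eq_of_subset_of_card_le
    · intro w hw
      simp only [Finset.mem_insert, Finset.mem_singleton] at hw ⊢
      rcases hw with rfl | rfl
      · exact hax
      · exact hay
    · rw [hq.1.2, hq'.1.2]
  rw [hset]

lemma choose_two_odd (y : ℕ) : (2*y+1).choose 2 = (2*y+1)*y := by
  rw [Nat.choose_two_right, show 2*y+1-1 = 2*y by omega,
    show (2*y+1)*(2*y) = ((2*y+1)*y)*2 by ring]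
  exact Nat.mul_div_cancel _ (by omega)

/- ===== blow-up construction ===== -/
def lift (u P v c : ℕ) : ℕ := (c*P + v/u)*u + v % u

def baseOf (u P v : ℕ) : ℕ := ((v/u) % P)*u + v % u

def blowT (u P m : ℕ) (t : Finset ℕ) : Finset (Finset ℕ) :=
  ((Finset.range m) ×ˢ (Finset.range m)).image (fun cd =>
    {lift u P ((t.sort (· ≤ ·)).getD 0 0) cd.1,
     lift u P ((t.sort (· ≤ ·)).getD 1 0) cd.2,
     lift u P ((t.sort (· ≤ ·)).getD 2 0) ((cd.1 + cd.2) % m)})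

def blowF (u P m : ℕ) (Δ : Finset (Finset ℕ)) : Finset (Finset ℕ) :=
  Δ.biUnion (blowT u P m)

lemma sort_three {t : Finset ℕ} (h : t.card = 3) :
    ∃ a b c, t.sort (· ≤ ·) = [a,b,c] ∧ t = {a,b,c} ∧ a ≠ b ∧ a ≠ c ∧ b ≠ c := by
  have hlen : (t.sort (· ≤ ·)).length = 3 := by rw [Finset.length_sort, h]
  obtain ⟨a, b, c, habc⟩ := List.length_eq_three.1 hlen
  have hnd := Finset.sort_nodup t (· ≤ ·)
  rw [habc] at hnd
  simp only [List.nodup_cons, List.mem_cons, List.mem_singleton, List.not_mem_nil,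
    List.nodup_nil] at hnd
  refine ⟨a, b, c, habc, ?_, ?_, ?_, ?_⟩
  · ext w
    rw [← Finset.mem_sort (· ≤ ·), habc]
    simp [or_assoc]
  · tauto
  · tauto
  · tauto

lemma lift_lt {u P m v c : ℕ} (hv : v < P*u) (hc : c < m) (hu : 0 < u) :
    lift u P v c < (m*P)*u := by
  have hdu : v/u < P := by rw [Nat.div_lt_iff_lt_mul hu]; exact hv
  have : c*P + v/u < m*P := by
    calc c*P + v/u < c*P + P := by omega
    _ = (c+1)*P := by ring
    _ ≤ m*P := Nat.mul_le_mul_right P (by omega)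
  exact encu_lt (Nat.mod_lt _ hu) this

lemma lift_mod {u P : ℕ} (v c : ℕ) (hu : 0 < u) : lift u P v c % u = v % u :=
  encu_mod (Nat.mod_lt _ hu)

lemma lift_base_eq {u P m v : ℕ} (hu : 0 < u) (hP : 0 < P) (hv : v < (m*P)*u) :
    lift u P (baseOf u P v) (v/u/P) = v := by
  have h1 : baseOf u P v / u = (v/u) % P := encu_div (Nat.mod_lt _ hu)
  have h2 : baseOf u P v % u = v % u := encu_mod (Nat.mod_lt _ hu)
  rw [lift, h1, h2]
  rw [show v/u/P*P + v/u%P = v/u by rw [mul_comm]; exact Nat.div_add_mod _ _]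
  exact encu_eq v hu

lemma baseOf_lt {u P v : ℕ} (hu : 0 < u) (hP : 0 < P) : baseOf u P v < P*u :=
  encu_lt (Nat.mod_lt _ hu) (Nat.mod_lt _ hP)

lemma baseOf_mod {u P v : ℕ} (hu : 0 < u) : baseOf u P v % u = v % u :=
  encu_mod (Nat.mod_lt _ hu)

lemma copy_lt {u P m v : ℕ} (hu : 0 < u) (hP : 0 < P) (hv : v < (m*P)*u) :
    v/u/P < m := by
  rw [Nat.div_lt_iff_lt_mul hP, Nat.div_lt_iff_lt_mul hu]
  calc v < m*P*u := hv
  _ = m * P * u := rfl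

lemma baseOf_lift {u P v c : ℕ} (hu : 0 < u) (hv : v < P*u) :
    baseOf u P (lift u P v c) = v := by
  have hvm : v % u < u := Nat.mod_lt _ hu
  have hdu : v/u < P := by rw [Nat.div_lt_iff_lt_mul hu]; exact hv
  rw [baseOf, lift, encu_div hvm, encu_mod hvm, add_comm (c*P) (v/u),
    Nat.add_mul_mod_self_right, Nat.mod_eq_of_lt hdu]
  exact encu_eq v hu

lemma copy_of_lift {u P v c : ℕ} (hu : 0 < u) (hP : 0 < P) (hv : v < P*u) :
    (lift u P v c)/u/P = c := by
  have hvm : v % u < u := Nat.mod_lt _ hu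
  have hdu : v/u < P := by rw [Nat.div_lt_iff_lt_mul hu]; exact hv
  rw [lift, encu_div hvm, add_comm (c*P) (v/u), Nat.add_mul_div_right _ _ hP,
    Nat.div_eq_of_lt hdu, zero_add]

lemma mod_solve1 {m cv cw : ℕ} (h1 : cv < m) (h2 : cw < m) :
    (cv + (cw + m - cv) % m) % m = cw := by
  rw [Nat.add_mod_mod, show cv + (cw + m - cv) = cw + m by omega,
    Nat.add_mod_right, Nat.mod_eq_of_lt h2]

lemma mod_solve2 {m cv cw : ℕ} (h1 : cv < m) (h2 : cw < m) :
    ((cw + m - cv) % m + cv) % m = cw := by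
  rw [Nat.mod_add_mod, show (cw + m - cv) + cv = cw + m by omega,
    Nat.add_mod_right, Nat.mod_eq_of_lt h2]

lemma blowT_shape {P u m : ℕ} {Δ : Finset (Finset ℕ)} (G : GDDStruct P u Δ)
    {t : Finset ℕ} (ht : t ∈ Δ) :
    ∃ a b c, t = {a,b,c} ∧ a ∈ t ∧ b ∈ t ∧ c ∈ t ∧
      a < P*u ∧ b < P*u ∧ c < P*u ∧
      a % u ≠ b % u ∧ a % u ≠ c % u ∧ b % u ≠ c % u ∧
      blowT u P m t = ((Finset.range m) ×ˢ (Finset.range m)).image (fun cd =>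
        {lift u P a cd.1, lift u P b cd.2, lift u P c ((cd.1 + cd.2) % m)}) := by
  obtain ⟨hsub, hcard⟩ := G.mem t ht
  obtain ⟨a, b, c, hsort, hset, hab, hac, hbc⟩ := sort_three hcard
  have ha : a ∈ t := by rw [hset]; simp
  have hb : b ∈ t := by rw [hset]; simp
  have hc : c ∈ t := by rw [hset]; simp
  refine ⟨a, b, c, hset, ha, hb, hc, ?_, ?_, ?_,
    G.trans t ht a ha b hb hab, G.trans t ht a ha c hc hac, G.trans t ht b hb c hc hbc, ?_⟩
  · simpa using hsub ha
  · simpa using hsub hb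
  · simpa using hsub hc
  · rw [blowT, hsort]; rfl

lemma blow_base_image {P u m : ℕ} (hu : 0 < u) (hP : 0 < P) {Δ : Finset (Finset ℕ)}
    (G : GDDStruct P u Δ) {t s : Finset ℕ} (ht : t ∈ Δ) (hs : s ∈ blowT u P m t) :
    s.image (baseOf u P) = t := by
  obtain ⟨a, b, c, hset, _, _, _, hau, hbu, hcu, _, _, _, heq⟩ := blowT_shape G ht
  rw [heq, Finset.mem_image] at hs
  obtain ⟨cd, _, rfl⟩ := hs
  rw [Finset.image_insert, Finset.image_insert, Finset.image_singleton,
    baseOf_lift hu hau, baseOf_lift hu hbu, baseOf_lift hu hcu, hset]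

lemma blow_gdd {P u m : ℕ} (hu : 0 < u) (hP : 0 < P) (hm : 0 < m)
    {Δ : Finset (Finset ℕ)} (G : GDDStruct P u Δ) :
    GDDStruct (m*P) u (blowF u P m Δ) ∧ (blowF u P m Δ).card = (m*m) * Δ.card := by
  constructor
  · constructor
    · -- mem
      intro s hs
      rw [blowF, Finset.mem_biUnion] at hs
      obtain ⟨t, ht, hs⟩ := hs
      obtain ⟨a, b, c, hset, _, _, _, hau, hbu, hcu, rab, rac, rbc, heq⟩ := blowT_shape G ht
      rw [heq, Finset.mem_image] at hs
      obtain ⟨cd, hcd, rfl⟩ := hs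
      rw [Finset.mem_product, Finset.mem_range, Finset.mem_range] at hcd
      have h3 : (cd.1 + cd.2) % m < m := Nat.mod_lt _ hm
      constructor
      · intro w hw
        simp only [Finset.mem_insert, Finset.mem_singleton] at hw
        rw [Finset.mem_range]
        rcases hw with rfl | rfl | rfl
        · exact lift_lt hau hcd.1 hu
        · exact lift_lt hbu hcd.2 hu
        · exact lift_lt hcu h3 hu
      · have d1 : lift u P a cd.1 ≠ lift u P b cd.2 := by
          intro hcon
          apply rab
          rw [← lift_mod (P := P) a cd.1 hu, ← lift_mod (P := P) b cd.2 hu, hcon]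
        have d2 : lift u P a cd.1 ≠ lift u P c ((cd.1 + cd.2) % m) := by
          intro hcon
          apply rac
          rw [← lift_mod (P := P) a cd.1 hu, ← lift_mod (P := P) c ((cd.1 + cd.2) % m) hu, hcon]
        have d3 : lift u P b cd.2 ≠ lift u P c ((cd.1 + cd.2) % m) := by
          intro hcon
          apply rbc
          rw [← lift_mod (P := P) b cd.2 hu, ← lift_mod (P := P) c ((cd.1 + cd.2) % m) hu, hcon]
        rw [Finset.card_insert_of_notMem (by simp [d1, d2]),
          Finset.card_insert_of_notMem (by simp [d3]), Finset.card_singleton]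
    · -- trans
      intro s hs v hv w hw hvw
      rw [blowF, Finset.mem_biUnion] at hs
      obtain ⟨t, ht, hs⟩ := hs
      obtain ⟨a, b, c, hset, _, _, _, hau, hbu, hcu, rab, rac, rbc, heq⟩ := blowT_shape G ht
      rw [heq, Finset.mem_image] at hs
      obtain ⟨cd, hcd, rfl⟩ := hs
      simp only [Finset.mem_insert, Finset.mem_singleton] at hv hw
      have ma := lift_mod (u := u) (P := P) a cd.1 hu
      have mb := lift_mod (u := u) (P := P) b cd.2 hu
      have mc := lift_mod (u := u) (P := P) c ((cd.1 + cd.2) % m) hu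
      rcases hv with rfl | rfl | rfl <;> rcases hw with rfl | rfl | rfl <;>
        first
          | exact absurd rfl hvw
          | (rw [ma, mb]; exact rab)
          | (rw [mb, ma]; exact fun h => rab h.symm)
          | (rw [ma, mc]; exact rac)
          | (rw [mc, ma]; exact fun h => rac h.symm)
          | (rw [mb, mc]; exact rbc)
          | (rw [mc, mb]; exact fun h => rbc h.symm)
    · -- cover
      intro v hv w hw hne
      have hv' : v < (m*P)*u := hv
      have hw' : w < (m*P)*u := hw
      have hbv : baseOf u P v < P*u := baseOf_lt hu hP
      have hbw : baseOf u P w < P*u := baseOf_lt hu hP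
      have hbne : baseOf u P v % u ≠ baseOf u P w % u := by
        rw [baseOf_mod hu, baseOf_mod hu]; exact hne
      obtain ⟨t, ht, hvt, hwt⟩ := G.cover _ hbv _ hbw hbne
      obtain ⟨a, b, c, hset, _, _, _, hau, hbu, hcu, rab, rac, rbc, heq⟩ := blowT_shape G ht
      have hcv : v/u/P < m := copy_lt hu hP hv'
      have hcw : w/u/P < m := copy_lt hu hP hw'
      have hlv := lift_base_eq hu hP hv'
      have hlw := lift_base_eq hu hP hw'
      rw [hset] at hvt hwt
      simp only [Finset.mem_insert, Finset.mem_singleton] at hvt hwt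
      have hmem : ∀ cd₁ cd₂, cd₁ < m → cd₂ < m →
          ({lift u P a cd₁, lift u P b cd₂, lift u P c ((cd₁ + cd₂) % m)} : Finset ℕ)
            ∈ blowF u P m Δ := by
        intro cd₁ cd₂ h1 h2
        rw [blowF, Finset.mem_biUnion]
        refine ⟨t, ht, ?_⟩
        rw [heq, Finset.mem_image]
        exact ⟨(cd₁, cd₂), Finset.mem_product.2 ⟨Finset.mem_range.2 h1, Finset.mem_range.2 h2⟩, rfl⟩
      -- helper membership lemmas
      have m1 : ∀ x y z v : ℕ, x = v → v ∈ ({x,y,z} : Finset ℕ) := by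
        intro x y z v h; rw [← h]; simp
      have m2 : ∀ x y z v : ℕ, y = v → v ∈ ({x,y,z} : Finset ℕ) := by
        intro x y z v h; rw [← h]; simp
      have m3 : ∀ x y z v : ℕ, z = v → v ∈ ({x,y,z} : Finset ℕ) := by
        intro x y z v h; rw [← h]; simp
      rcases hvt with hva | hvb | hvc <;> rcases hwt with hwa | hwb | hwc
      · exact absurd (hva.trans hwa.symm) (fun h => hbne (by rw [h]))
      · -- v at a, w at b
        rw [hva] at hlv; rw [hwb] at hlw
        exact ⟨_, hmem (v/u/P) (w/u/P) hcv hcw, m1 _ _ _ _ hlv, m2 _ _ _ _ hlw⟩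
      · -- v at a, w at c
        rw [hva] at hlv; rw [hwc] at hlw
        refine ⟨_, hmem (v/u/P) ((w/u/P + m - v/u/P) % m) hcv (Nat.mod_lt _ hm),
          m1 _ _ _ _ hlv, m3 _ _ _ _ ?_⟩
        rw [mod_solve1 hcv hcw]; exact hlw
      · -- v at b, w at a
        rw [hvb] at hlv; rw [hwa] at hlw
        exact ⟨_, hmem (w/u/P) (v/u/P) hcw hcv, m2 _ _ _ _ hlv, m1 _ _ _ _ hlw⟩
      · exact absurd (hvb.trans hwb.symm) (fun h => hbne (by rw [h]))
      · -- v at b, w at c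
        rw [hvb] at hlv; rw [hwc] at hlw
        refine ⟨_, hmem ((w/u/P + m - v/u/P) % m) (v/u/P) (Nat.mod_lt _ hm) hcv,
          m2 _ _ _ _ hlv, m3 _ _ _ _ ?_⟩
        rw [mod_solve2 hcv hcw]; exact hlw
      · -- v at c, w at a
        rw [hvc] at hlv; rw [hwa] at hlw
        refine ⟨_, hmem (w/u/P) ((v/u/P + m - w/u/P) % m) hcw (Nat.mod_lt _ hm),
          m3 _ _ _ _ ?_, m1 _ _ _ _ hlw⟩
        rw [mod_solve1 hcw hcv]; exact hlv
      · -- v at c, w at b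
        rw [hvc] at hlv; rw [hwb] at hlw
        refine ⟨_, hmem ((v/u/P + m - w/u/P) % m) (w/u/P) (Nat.mod_lt _ hm) hcw,
          m3 _ _ _ _ ?_, m2 _ _ _ _ hlw⟩
        rw [mod_solve2 hcw hcv]; exact hlv
      · exact absurd (hvc.trans hwc.symm) (fun h => hbne (by rw [h]))
  · -- cardinality
    rw [blowF, Finset.card_biUnion]
    · have hone : ∀ t ∈ Δ, (blowT u P m t).card = m*m := by
        intro t ht
        obtain ⟨a, b, c, hset, _, _, _, hau, hbu, hcu, rab, rac, rbc, heq⟩ := blowT_shape G ht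
        rw [heq, Finset.card_image_of_injOn, Finset.card_product, Finset.card_range]
        intro cd hcd cd' hcd' hset2
        simp only [Finset.mem_coe, Finset.mem_product, Finset.mem_range] at hcd hcd'
        dsimp only at hset2
        have h1 : lift u P a cd.1 ∈
            ({lift u P a cd'.1, lift u P b cd'.2, lift u P c ((cd'.1 + cd'.2) % m)} : Finset ℕ) := by
          rw [← hset2]; simp
        have h2 : lift u P b cd.2 ∈
            ({lift u P a cd'.1, lift u P b cd'.2, lift u P c ((cd'.1 + cd'.2) % m)} : Finset ℕ) := by
          rw [← hset2]; simp
        simp only [Finset.mem_insert, Finset.mem_singleton] at h1 h2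
        have e1 : cd.1 = cd'.1 := by
          rcases h1 with h | h | h
          · have := congrArg (fun z => z/u/P) h
            simpa [copy_of_lift hu hP hau] using this
          · have := congrArg (fun z => z % u) h
            simp only [lift_mod _ _ hu] at this
            exact absurd this rab
          · have := congrArg (fun z => z % u) h
            simp only [lift_mod _ _ hu] at this
            exact absurd this rac
        have e2 : cd.2 = cd'.2 := by
          rcases h2 with h | h | h
          · have := congrArg (fun z => z % u) h
            simp only [lift_mod _ _ hu] at this
            exact absurd this.symm rab
          · have := congrArg (fun z => z/u/P) h
            simpa [copy_of_lift hu hP hbu] using this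
          · have := congrArg (fun z => z % u) h
            simp only [lift_mod _ _ hu] at this
            exact absurd this rbc
        exact Prod.ext e1 e2
      rw [Finset.sum_congr rfl hone, Finset.sum_const, smul_eq_mul, mul_comm]
    · intro t₁ h₁ t₂ h₂ hne
      rw [Function.onFun, Finset.disjoint_left]
      intro s hs₁ hs₂
      apply hne
      rw [← blow_base_image hu hP G h₁ hs₁, ← blow_base_image hu hP G h₂ hs₂]

/- ===== filling a GDD with group structures ===== -/
def embE (u x : ℕ) (e : Finset ℕ) : Finset ℕ := e.image (fun p => p*u + x)

lemma emb_inj {u x : ℕ} (hu : 0 < u) : Function.Injective (fun p => p*u + x) := by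
  intro p q h
  simp only at h
  have h2 : p*u = q*u := by omega
  exact Nat.eq_of_mul_eq_mul_right hu h2

lemma fill {k u : ℕ} (hk : 0 < k) (hu : 0 < u)
    {M : Fin 5 → Finset (Finset ℕ)} {Δk Δc : Finset (Finset ℕ)}
    (S : DStruct k M Δk) (G : GDDStruct (6*k) u Δc)
    (hcard : Δc.card + u * (6*k*(k-1)) = 6*(k*u)*(k*u - 1)) :
    DStruct (k*u) (fun i => (Finset.range u).biUnion (fun x => (M i).image (embE u x)))
      (Δc ∪ (Finset.range u).biUnion (fun x => Δk.image (embE u x))) := by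
  have hn : (6*k)*u = 6*(k*u) := by ring
  have hlt : ∀ p x, p < 6*k → x < u → p*u + x < 6*(k*u) := by
    intro p x hp hx; rw [← hn]; exact encu_lt hx hp
  have hfam_disj : ∀ (F : Finset (Finset ℕ)), (∀ s ∈ F, s.Nonempty) →
      ∀ x ∈ Finset.range u, ∀ y ∈ Finset.range u, x ≠ y →
      Disjoint (F.image (embE u x)) (F.image (embE u y)) := by
    intro F hne x hx y hy hxy
    rw [Finset.mem_range] at hx hy
    rw [Finset.disjoint_left]
    intro s hs₁ hs₂
    rw [Finset.mem_image] at hs₁ hs₂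
    obtain ⟨e₁, he₁, rfl⟩ := hs₁
    obtain ⟨e₂, he₂, heq⟩ := hs₂
    obtain ⟨p, hp⟩ := hne e₁ he₁
    have h1 : p*u + x ∈ embE u y e₂ := by rw [heq] at *; exact Finset.mem_image_of_mem _ hp
    rw [embE, Finset.mem_image] at h1
    obtain ⟨q, _, hq⟩ := h1
    apply hxy
    rw [← encu_mod (i := p) hx, ← encu_mod (i := q) hy, hq]
  have hM_nonempty : ∀ i : Fin 5, ∀ e ∈ M i, e.Nonempty := by
    intro i e he
    rw [← Finset.card_pos, (S.match_mem i e he).2]; omega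
  have hΔ_nonempty : ∀ t ∈ Δk, t.Nonempty := by
    intro t ht
    rw [← Finset.card_pos, (S.tri_mem t ht).2]; omega
  constructor
  · -- match_mem
    intro i e' he'
    rw [Finset.mem_biUnion] at he'
    obtain ⟨x, hx, he'⟩ := he'
    rw [Finset.mem_image] at he'
    obtain ⟨e, he, rfl⟩ := he'
    rw [Finset.mem_range] at hx
    constructor
    · intro w hw
      rw [embE, Finset.mem_image] at hw
      obtain ⟨p, hp, rfl⟩ := hw
      have hp6 : p < 6*k := by
        have := (S.match_mem i e he).1 hp; simpa using this
      rw [Finset.mem_range]; exact hlt p x hp6 hx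
    · rw [embE, Finset.card_image_of_injective _ (emb_inj hu), (S.match_mem i e he).2]
  · -- match_span
    intro i v hv
    have hx : v % u < u := Nat.mod_lt _ hu
    have hp : v / u < 6*k := by
      rw [Nat.div_lt_iff_lt_mul hu, hn]; exact hv
    obtain ⟨e, he, hpe⟩ := S.match_span i (v/u) hp
    refine ⟨embE u (v%u) e, ?_, ?_⟩
    · rw [Finset.mem_biUnion]
      exact ⟨v%u, Finset.mem_range.2 hx, Finset.mem_image_of_mem _ he⟩
    · rw [embE, Finset.mem_image]
      exact ⟨v/u, hpe, encu_eq v hu⟩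
  · -- match_disj
    intro i e₁' he₁ e₂' he₂ hne
    rw [Finset.mem_biUnion] at he₁ he₂
    obtain ⟨x, hx, he₁⟩ := he₁
    obtain ⟨y, hy, he₂⟩ := he₂
    rw [Finset.mem_image] at he₁ he₂
    obtain ⟨e₁, he₁m, rfl⟩ := he₁
    obtain ⟨e₂, he₂m, rfl⟩ := he₂
    rw [Finset.mem_range] at hx hy
    rcases eq_or_ne x y with rfl | hxy
    · have hee : e₁ ≠ e₂ := fun h => hne (by rw [h])
      have hd := S.match_disj i e₁ he₁m e₂ he₂m hee
      rw [Finset.disjoint_left] at hd ⊢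
      intro w hw₁ hw₂
      rw [embE, Finset.mem_image] at hw₁ hw₂
      obtain ⟨p, hp, rfl⟩ := hw₁
      obtain ⟨q, hq, hqe⟩ := hw₂
      have := emb_inj (x := x) hu hqe
      rw [this] at hq
      exact hd hp hq
    · rw [Finset.disjoint_left]
      intro w hw₁ hw₂
      rw [embE, Finset.mem_image] at hw₁ hw₂
      obtain ⟨p, _, rfl⟩ := hw₁
      obtain ⟨q, _, hqe⟩ := hw₂
      apply hxy
      rw [← encu_mod (i := p) hx, ← encu_mod (i := q) hy, hqe]
  · -- match_card
    intro i
    rw [Finset.card_biUnion (fun x hx y hy hxy =>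
      hfam_disj (M i) (hM_nonempty i) x hx y hy hxy)]
    have : ∀ x ∈ Finset.range u, ((M i).image (embE u x)).card = 3*k := by
      intro x _
      rw [Finset.card_image_of_injOn, S.match_card i]
      intro e₁ _ e₂ _ h
      exact Finset.image_injective (emb_inj hu) h
    rw [Finset.sum_congr rfl this, Finset.sum_const, Finset.card_range, smul_eq_mul]
    ring
  · -- tri_mem
    intro t ht
    rw [Finset.mem_union] at ht
    rcases ht with ht | ht
    · obtain ⟨hsub, hc⟩ := G.mem t ht
      refine ⟨?_, hc⟩
      rw [← hn]; exact hsub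
    · rw [Finset.mem_biUnion] at ht
      obtain ⟨x, hx, ht⟩ := ht
      rw [Finset.mem_image] at ht
      obtain ⟨t₀, ht₀, rfl⟩ := ht
      rw [Finset.mem_range] at hx
      constructor
      · intro w hw
        rw [embE, Finset.mem_image] at hw
        obtain ⟨p, hp, rfl⟩ := hw
        have hp6 : p < 6*k := by
          have := (S.tri_mem t₀ ht₀).1 hp; simpa using this
        rw [Finset.mem_range]; exact hlt p x hp6 hx
      · rw [embE, Finset.card_image_of_injective _ (emb_inj hu), (S.tri_mem t₀ ht₀).2]
  · -- tri_card
    rw [Finset.card_union_of_disjoint, Finset.card_biUnion (fun x hx y hy hxy =>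
      hfam_disj Δk hΔ_nonempty x hx y hy hxy)]
    · have : ∀ x ∈ Finset.range u, (Δk.image (embE u x)).card = 6*k*(k-1) := by
        intro x _
        rw [Finset.card_image_of_injOn, S.tri_card]
        intro e₁ _ e₂ _ h
        exact Finset.image_injective (emb_inj hu) h
      rw [Finset.sum_congr rfl this, Finset.sum_const, Finset.card_range, smul_eq_mul]
      exact hcard
    · rw [Finset.disjoint_left]
      intro t ht₁ ht₂
      rw [Finset.mem_biUnion] at ht₂
      obtain ⟨x, hx, ht₂⟩ := ht₂
      rw [Finset.mem_image] at ht₂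
      obtain ⟨t₀, ht₀, rfl⟩ := ht₂
      rw [Finset.mem_range] at hx
      -- a set in Δc has two elements with distinct residues, but embE u x t₀ has all ≡ x
      have hc3 : 1 < (embE u x t₀).card := by
        rw [embE, Finset.card_image_of_injective _ (emb_inj hu), (S.tri_mem t₀ ht₀).2]; omega
      obtain ⟨a, ha, b, hb, hab⟩ := Finset.one_lt_card.1 hc3
      have := G.trans _ ht₁ a ha b hb hab
      apply this
      rw [embE, Finset.mem_image] at ha hb
      obtain ⟨p, _, rfl⟩ := ha
      obtain ⟨q, _, rfl⟩ := hb
      rw [encu_mod hx, encu_mod hx]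
  · -- cover
    intro v hv w hw hvw
    rcases eq_or_ne (v % u) (w % u) with hmod | hmod
    · have hx : v % u < u := Nat.mod_lt _ hu
      have hp : v / u < 6*k := by rw [Nat.div_lt_iff_lt_mul hu, hn]; exact hv
      have hq : w / u < 6*k := by rw [Nat.div_lt_iff_lt_mul hu, hn]; exact hw
      have hpq : v / u ≠ w / u := by
        intro h
        apply hvw
        rw [← encu_eq v hu, ← encu_eq w hu, h, hmod]
      rcases S.cover (v/u) hp (w/u) hq hpq with ⟨i, e, he, hve, hwe⟩ | ⟨t, ht, hvt, hwt⟩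
      · left
        refine ⟨i, embE u (v%u) e, ?_, ?_, ?_⟩
        · rw [Finset.mem_biUnion]
          exact ⟨v%u, Finset.mem_range.2 hx, Finset.mem_image_of_mem _ he⟩
        · rw [embE, Finset.mem_image]; exact ⟨v/u, hve, encu_eq v hu⟩
        · rw [embE, Finset.mem_image]; exact ⟨w/u, hwe, by rw [hmod]; exact encu_eq w hu⟩
      · right
        refine ⟨embE u (v%u) t, ?_, ?_, ?_⟩
        · rw [Finset.mem_union]; right
          rw [Finset.mem_biUnion]
          exact ⟨v%u, Finset.mem_range.2 hx, Finset.mem_image_of_mem _ ht⟩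
        · rw [embE, Finset.mem_image]; exact ⟨v/u, hvt, encu_eq v hu⟩
        · rw [embE, Finset.mem_image]; exact ⟨w/u, hwt, by rw [hmod]; exact encu_eq w hu⟩
    · right
      have hv' : v < (6*k)*u := by rw [hn]; exact hv
      have hw' : w < (6*k)*u := by rw [hn]; exact hw
      obtain ⟨t, ht, hvt, hwt⟩ := G.cover v hv' w hw' hmod
      exact ⟨t, Finset.mem_union_left _ ht, hvt, hwt⟩
  · -- purity
    intro e' he'
    rw [Finset.mem_biUnion] at he'
    obtain ⟨x, hx, he'⟩ := he'
    rw [Finset.mem_image] at he'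
    obtain ⟨e, he, rfl⟩ := he'
    rw [Finset.mem_range] at hx
    constructor
    · intro t ht hsub
      rw [Finset.mem_union] at ht
      rcases ht with ht | ht
      · -- t in the GDD part : impossible since e' has two elements with the same residue
        have hc2 : 1 < (embE u x e).card := by
          rw [embE, Finset.card_image_of_injective _ (emb_inj hu), (S.match_mem 4 e he).2]
          omega
        obtain ⟨a, ha, b, hb, hab⟩ := Finset.one_lt_card.1 hc2
        have := G.trans t ht a (hsub ha) b (hsub hb) hab
        apply this
        rw [embE, Finset.mem_image] at ha hb
        obtain ⟨p, _, rfl⟩ := ha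
        obtain ⟨q, _, rfl⟩ := hb
        rw [encu_mod hx, encu_mod hx]
      · rw [Finset.mem_biUnion] at ht
        obtain ⟨y, hy, ht⟩ := ht
        rw [Finset.mem_image] at ht
        obtain ⟨t₀, ht₀, rfl⟩ := ht
        rw [Finset.mem_range] at hy
        -- first : x = y
        obtain ⟨p, hp⟩ := hM_nonempty 4 e he
        have h1 : p*u + x ∈ embE u y t₀ := hsub (Finset.mem_image_of_mem _ hp)
        rw [embE, Finset.mem_image] at h1
        obtain ⟨q, _, hq⟩ := h1
        have hxy : x = y := by rw [← encu_mod (i := p) hx, ← encu_mod (i := q) hy, hq]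
        subst hxy
        -- then e ⊆ t₀
        have hsub₀ : e ⊆ t₀ := by
          intro r hr
          have h2 : r*u + x ∈ embE u x t₀ := hsub (Finset.mem_image_of_mem _ hr)
          rw [embE, Finset.mem_image] at h2
          obtain ⟨r', hr', hre⟩ := h2
          rw [emb_inj hu hre] at hr'; exact hr'
        exact (S.purity e he).1 t₀ ht₀ hsub₀
    · intro i hi hmem
      rw [Finset.mem_biUnion] at hmem
      obtain ⟨y, hy, hmem⟩ := hmem
      rw [Finset.mem_image] at hmem
      obtain ⟨f, hf, hfe⟩ := hmem
      rw [Finset.mem_range] at hy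
      obtain ⟨p, hp⟩ := hM_nonempty i f hf
      have h1 : p*u + y ∈ embE u x e := by rw [← hfe]; exact Finset.mem_image_of_mem _ hp
      rw [embE, Finset.mem_image] at h1
      obtain ⟨q, _, hq⟩ := h1
      have hxy : y = x := by rw [← encu_mod (i := p) hy, ← encu_mod (i := q) hx, hq]
      subst hxy
      have : f = e := Finset.image_injective (emb_inj hu) hfe
      subst this
      exact (S.purity f he).2 i hi hf

lemma goodD_all : ∀ k, 0 < k → GoodD k := by
  intro k
  induction k using Nat.strong_induction_on with
  | _ k IH =>
    intro hk
    rcases (show k % 2 = 1 ∨ k % 4 = 2 ∨ k % 4 = 0 by omega) with h | h | h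
    · -- k odd : fill the blown-up Bose GDD (groups of size 6) with K₆ structures
      obtain ⟨y, rfl⟩ : ∃ y, k = 2*y+1 := ⟨k/2, by omega⟩
      have hody : Odd (2*y+1) := ⟨y, by ring⟩
      have hblow := blow_gdd (P := 3) (u := 2*y+1) (m := 2)
        (by omega) (by omega) (by omega) (bose_gdd hody)
      have hG : GDDStruct (6*1) (2*y+1) (blowF (2*y+1) 3 2 (bose (2*y+1))) := by
        rw [show (6:ℕ)*1 = 2*3 by norm_num]; exact hblow.1
      have hcard : (blowF (2*y+1) 3 2 (bose (2*y+1))).card + (2*y+1) * (6*1*(1-1))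
          = 6*(1*(2*y+1))*(1*(2*y+1) - 1) := by
        rw [hblow.2, bose_card hody, choose_two_odd]
        simp only [one_mul, Nat.sub_self, Nat.mul_zero, Nat.add_zero]
        rw [show 2*y+1-1 = 2*y by omega]
        ring
      have hres := fill (by omega) (by omega) goodD1 hG hcard
      rw [one_mul] at hres
      exact ⟨_, _, hres⟩
    · -- k ≡ 2 mod 4 : fill the blown-up Bose GDD (groups of size 12) with K₁₂ structures
      obtain ⟨y, rfl⟩ : ∃ y, k = 2*(2*y+1) := ⟨k/4, by omega⟩
      have hody : Odd (2*y+1) := ⟨y, by ring⟩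
      have hblow := blow_gdd (P := 3) (u := 2*y+1) (m := 4)
        (by omega) (by omega) (by omega) (bose_gdd hody)
      have hG : GDDStruct (6*2) (2*y+1) (blowF (2*y+1) 3 4 (bose (2*y+1))) := by
        rw [show (6:ℕ)*2 = 4*3 by norm_num]; exact hblow.1
      have hcard : (blowF (2*y+1) 3 4 (bose (2*y+1))).card + (2*y+1) * (6*2*(2-1))
          = 6*(2*(2*y+1))*(2*(2*y+1) - 1) := by
        rw [hblow.2, bose_card hody, choose_two_odd]
        rw [show 2*(2*y+1)-1 = 4*y+1 by omega]
        norm_num; ring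
      have hres := fill (by omega) (by omega) goodD2 hG hcard
      exact ⟨_, _, hres⟩
    · -- k ≡ 0 mod 4 : fill the blown-up GDD(2⁴) (groups of size 6(k/4)) recursively
      obtain ⟨j, rfl⟩ : ∃ j, k = 4*(j+1) := ⟨k/4 - 1, by omega⟩
      obtain ⟨M', Δ', S'⟩ := IH (j+1) (by omega) (by omega)
      have hblow := blow_gdd (P := 2) (u := 4) (m := 3*(j+1))
        (by omega) (by omega) (by omega) gdd8
      have hG : GDDStruct (6*(j+1)) 4 (blowF 4 2 (3*(j+1)) G8) := by
        rw [show (6:ℕ)*(j+1) = 3*(j+1)*2 by ring]; exact hblow.1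
      have hcard : (blowF 4 2 (3*(j+1)) G8).card + 4 * (6*(j+1)*((j+1)-1))
          = 6*((j+1)*4)*((j+1)*4 - 1) := by
        rw [hblow.2, gdd8_card]
        rw [show (j+1)-1 = j by omega, show (j+1)*4-1 = 4*j+3 by omega]
        ring
      have hres := fill (by omega) (by omega) S' hG hcard
      rw [show (j+1)*4 = 4*(j+1) by ring] at hres
      exact ⟨_, _, hres⟩

/- ===== final assembly ===== -/
def sh (e : Finset ℕ) : Finset ℕ := e.image (· + 5)

lemma sh_inj : Function.Injective (· + 5 : ℕ → ℕ) := by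
  intro p q h
  simpa using h

lemma sh_card (e : Finset ℕ) : (sh e).card = e.card :=
  Finset.card_image_of_injective _ sh_inj

lemma sh_injective : Function.Injective sh := fun e f h => Finset.image_injective sh_inj h

lemma sh_ge5 {e : Finset ℕ} {w : ℕ} (hw : w ∈ sh e) : 5 ≤ w := by
  rw [sh, Finset.mem_image] at hw
  obtain ⟨p, _, rfl⟩ := hw
  omega

lemma sh_mem_of {e : Finset ℕ} {p : ℕ} (hp : p ∈ e) : p + 5 ∈ sh e :=
  Finset.mem_image_of_mem _ hp

lemma sh_strip {e : Finset ℕ} {p : ℕ} (hp : p + 5 ∈ sh e) : p ∈ e := by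
  rw [sh, Finset.mem_image] at hp
  obtain ⟨q, hq, hqe⟩ := hp
  have : q = p := by omega
  rwa [← this]

lemma sh_subset {e f : Finset ℕ} (h : sh e ⊆ sh f) : e ⊆ f := by
  intro p hp
  exact sh_strip (h (sh_mem_of hp))

lemma assemble {k : ℕ} (hk : 0 < k) (h : GoodD k) :
    ∃ T : Finset (Finset ℕ), IsTripleFamily (Finset.Icc 1 (6*k+4)) T ∧
      T.card = ((6*k+4) ^ 2 - 2 * (6*k+4) + 4) / 6 ∧
      (uncoveredPairs (Finset.Icc 1 (6*k+4)) T).card = ((6*k+4) - 2) / 2 ∧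
      ∀ p ∈ uncoveredPairs (Finset.Icc 1 (6*k+4)) T,
        ∀ q ∈ uncoveredPairs (Finset.Icc 1 (6*k+4)) T, p ≠ q → Disjoint p q := by
  obtain ⟨M, Δ, S⟩ := h
  set a := 6*k+4 with ha
  -- the pieces
  set T4 : Finset (Finset ℕ) := {{1,2,3},{1,2,4}} with hT4
  set TA : Finset (Finset ℕ) :=
    (Finset.univ.filter (fun i : Fin 5 => i ≠ 4)).biUnion
      (fun i => (M i).image (fun e => insert (i.val+1) (sh e))) with hTA
  set TD : Finset (Finset ℕ) := Δ.image sh with hTD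
  set T : Finset (Finset ℕ) := T4 ∪ TA ∪ TD with hT
  set U : Finset (Finset ℕ) := insert {3,4} ((M 4).image sh) with hU
  -- basic facts about shifted edges
  have hMsub : ∀ i : Fin 5, ∀ e ∈ M i, ∀ w ∈ sh e, 5 ≤ w ∧ w ≤ a := by
    intro i e he w hw
    rw [sh, Finset.mem_image] at hw
    obtain ⟨p, hp, rfl⟩ := hw
    have : p < 6*k := by have := (S.match_mem i e he).1 hp; simpa using this
    omega
  have hΔsub : ∀ t ∈ Δ, ∀ w ∈ sh t, 5 ≤ w ∧ w ≤ a := by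
    intro t ht w hw
    rw [sh, Finset.mem_image] at hw
    obtain ⟨p, hp, rfl⟩ := hw
    have : p < 6*k := by have := (S.tri_mem t ht).1 hp; simpa using this
    omega
  have hval4 : ∀ i : Fin 5, i ≠ 4 → i.val + 1 ≤ 4 := by decide
  have hMne : ∀ i : Fin 5, ∀ e ∈ M i, e.Nonempty := by
    intro i e he
    rw [← Finset.card_pos, (S.match_mem i e he).2]; omega
  have hΔne : ∀ t ∈ Δ, t.Nonempty := by
    intro t ht
    rw [← Finset.card_pos, (S.tri_mem t ht).2]; omega
  -- membership lemmas for T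
  have hT123 : ({1,2,3} : Finset ℕ) ∈ T := by
    rw [hT]; exact Finset.mem_union_left _ (Finset.mem_union_left _ (by decide))
  have hT124 : ({1,2,4} : Finset ℕ) ∈ T := by
    rw [hT]; exact Finset.mem_union_left _ (Finset.mem_union_left _ (by decide))
  have hTAmem : ∀ i : Fin 5, i ≠ 4 → ∀ e ∈ M i, insert (i.val+1) (sh e) ∈ T := by
    intro i hi e he
    rw [hT]
    apply Finset.mem_union_left
    apply Finset.mem_union_right
    rw [hTA, Finset.mem_biUnion]
    exact ⟨i, Finset.mem_filter.2 ⟨Finset.mem_univ i, hi⟩, Finset.mem_image_of_mem _ he⟩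
  have hTDmem : ∀ t ∈ Δ, sh t ∈ T := by
    intro t ht
    rw [hT]
    exact Finset.mem_union_right _ (Finset.mem_image_of_mem _ ht)
  -- characterize membership in T
  have hTelim : ∀ t ∈ T, t = {1,2,3} ∨ t = {1,2,4} ∨
      (∃ i : Fin 5, i ≠ 4 ∧ ∃ e ∈ M i, t = insert (i.val+1) (sh e)) ∨
      (∃ t₀ ∈ Δ, t = sh t₀) := by
    intro t ht
    rw [hT, Finset.mem_union, Finset.mem_union] at ht
    rcases ht with (ht | ht) | ht
    · rw [hT4] at ht
      simp only [Finset.mem_insert, Finset.mem_singleton] at ht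
      tauto
    · rw [hTA, Finset.mem_biUnion] at ht
      obtain ⟨i, hi, ht⟩ := ht
      rw [Finset.mem_filter] at hi
      rw [Finset.mem_image] at ht
      obtain ⟨e, he, rfl⟩ := ht
      exact Or.inr (Or.inr (Or.inl ⟨i, hi.2, e, he, rfl⟩))
    · rw [hTD, Finset.mem_image] at ht
      obtain ⟨t₀, ht₀, rfl⟩ := ht
      exact Or.inr (Or.inr (Or.inr ⟨t₀, ht₀, rfl⟩))
  -- ======= claim 1 : triple family =======
  have claim1 : IsTripleFamily (Finset.Icc 1 a) T := by
    intro t ht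
    rcases hTelim t ht with rfl | rfl | ⟨i, hi, e, he, rfl⟩ | ⟨t₀, ht₀, rfl⟩
    · constructor
      · intro w hw
        simp only [Finset.mem_insert, Finset.mem_singleton] at hw
        rw [Finset.mem_Icc]
        rcases hw with rfl | rfl | rfl <;> omega
      · decide
    · constructor
      · intro w hw
        simp only [Finset.mem_insert, Finset.mem_singleton] at hw
        rw [Finset.mem_Icc]
        rcases hw with rfl | rfl | rfl <;> omega
      · decide
    · have hv4 := hval4 i hi
      constructor
      · intro w hw
        rw [Finset.mem_insert] at hw
        rw [Finset.mem_Icc]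
        rcases hw with rfl | hw
        · omega
        · have := hMsub i e he w hw; omega
      · rw [Finset.card_insert_of_notMem, sh_card, (S.match_mem i e he).2]
        intro hmem
        have := sh_ge5 hmem
        omega
    · constructor
      · intro w hw
        rw [Finset.mem_Icc]
        have := hΔsub t₀ ht₀ w hw; omega
      · rw [sh_card]; exact (S.tri_mem t₀ ht₀).2
  -- ======= cardinality of T =======
  have cardT4 : T4.card = 2 := by rw [hT4]; decide
  have cardTA : TA.card = 12*k := by
    rw [hTA, Finset.card_biUnion]
    · have hone : ∀ i ∈ Finset.univ.filter (fun i : Fin 5 => i ≠ 4),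
          ((M i).image (fun e => insert (i.val+1) (sh e))).card = 3*k := by
        intro i hi
        rw [Finset.card_image_of_injOn, S.match_card i]
        intro e₁ he₁ e₂ he₂ heq
        have h5 : i.val + 1 ∉ sh e₁ := by
          intro hmem
          have := sh_ge5 hmem
          have := hval4 i (Finset.mem_filter.1 hi).2
          omega
        have h5' : i.val + 1 ∉ sh e₂ := by
          intro hmem
          have := sh_ge5 hmem
          have := hval4 i (Finset.mem_filter.1 hi).2
          omega
        dsimp only at heq
        have : sh e₁ = sh e₂ := by
          rw [← Finset.erase_insert h5, ← Finset.erase_insert h5', heq]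
        exact sh_injective this
      rw [Finset.sum_congr rfl hone, Finset.sum_const, smul_eq_mul]
      rw [show (Finset.univ.filter (fun i : Fin 5 => i ≠ 4)).card = 4 by decide]
      ring
    · intro i hi j hj hij
      rw [Function.onFun, Finset.disjoint_left]
      intro s hs₁ hs₂
      rw [Finset.mem_image] at hs₁ hs₂
      obtain ⟨e₁, he₁, rfl⟩ := hs₁
      obtain ⟨e₂, he₂, heq⟩ := hs₂
      simp only [Finset.mem_coe, Finset.mem_filter] at hi hj
      have h1 : i.val + 1 ∈ insert (j.val+1) (sh e₂) := by
        rw [heq] at *; exact Finset.mem_insert_self _ _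
      rw [Finset.mem_insert] at h1
      rcases h1 with h1 | h1
      · exact hij (Fin.ext (by omega))
      · have := sh_ge5 h1
        have := hval4 i hi.2
        omega
  have cardTD : TD.card = 6*k*(k-1) := by
    rw [hTD, Finset.card_image_of_injOn (fun e₁ _ e₂ _ h => sh_injective h), S.tri_card]
  have hd1 : Disjoint (T4 ∪ TA) TD := by
    rw [Finset.disjoint_left]
    intro t ht₁ ht₂
    rw [hTD, Finset.mem_image] at ht₂
    obtain ⟨t₀, ht₀, rfl⟩ := ht₂
    rw [Finset.mem_union] at ht₁
    rcases ht₁ with ht₁ | ht₁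
    · rw [hT4] at ht₁
      simp only [Finset.mem_insert, Finset.mem_singleton] at ht₁
      have h1 : (1 : ℕ) ∈ sh t₀ := by
        rcases ht₁ with h | h <;> (rw [h]; decide)
      have := sh_ge5 h1; omega
    · rw [hTA, Finset.mem_biUnion] at ht₁
      obtain ⟨i, hi, ht₁⟩ := ht₁
      rw [Finset.mem_filter] at hi
      rw [Finset.mem_image] at ht₁
      obtain ⟨e, he, heq⟩ := ht₁
      have h1 : i.val + 1 ∈ sh t₀ := by rw [← heq]; exact Finset.mem_insert_self _ _
      have := sh_ge5 h1
      have := hval4 i hi.2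
      omega
  have hd2 : Disjoint T4 TA := by
    rw [Finset.disjoint_left]
    intro t ht₁ ht₂
    rw [hTA, Finset.mem_biUnion] at ht₂
    obtain ⟨i, hi, ht₂⟩ := ht₂
    rw [Finset.mem_image] at ht₂
    obtain ⟨e, he, heq⟩ := ht₂
    obtain ⟨p, hp⟩ := hMne i e he
    have h1 : p + 5 ∈ t := by
      rw [← heq]; exact Finset.mem_insert_of_mem (sh_mem_of hp)
    rw [hT4] at ht₁
    simp only [Finset.mem_insert, Finset.mem_singleton] at ht₁
    rcases ht₁ with rfl | rfl <;>
      (simp only [Finset.mem_insert, Finset.mem_singleton] at h1; omega)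
  have cardT : T.card = 2 + 12*k + 6*k*(k-1) := by
    rw [hT, Finset.card_union_of_disjoint hd1, Finset.card_union_of_disjoint hd2,
      cardT4, cardTA, cardTD]
  -- ======= uncovered pairs = U =======
  have hUeq : uncoveredPairs (Finset.Icc 1 a) T = U := by
    ext p
    rw [uncoveredPairs, Finset.mem_filter, Finset.mem_powersetCard]
    constructor
    · rintro ⟨⟨hsub, hcard2⟩, hunc⟩
      obtain ⟨x, y, hxy, rfl⟩ := Finset.card_eq_two.1 hcard2
      have hx : 1 ≤ x ∧ x ≤ a := by
        have := hsub (Finset.mem_insert_self x {y}); rw [Finset.mem_Icc] at this; exact this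
      have hy : 1 ≤ y ∧ y ≤ a := by
        have := hsub (Finset.mem_insert_of_mem (Finset.mem_singleton_self y))
        rw [Finset.mem_Icc] at this; exact this
      -- mixed pairs are always covered
      have covered_mix : ∀ x' y', 1 ≤ x' → x' ≤ 4 → 5 ≤ y' → y' ≤ a →
          ∃ t ∈ T, ({x',y'} : Finset ℕ) ⊆ t := by
        intro x' y' h1 h2 h3 h4
        have hw : y' - 5 < 6*k := by omega
        set i : Fin 5 := ⟨x'-1, by omega⟩ with hi
        have hi4 : i ≠ 4 := by
          intro hcon
          have hval : i.val = 4 := by rw [hcon]; rfl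
          rw [hi] at hval
          simp only at hval
          omega
        have hival : i.val + 1 = x' := by rw [hi]; simp only; omega
        obtain ⟨e, he, hye⟩ := S.match_span i (y'-5) hw
        refine ⟨insert (i.val+1) (sh e), hTAmem i hi4 e he, ?_⟩
        intro w hw'
        simp only [Finset.mem_insert, Finset.mem_singleton] at hw'
        rw [Finset.mem_insert]
        rcases hw' with rfl | rfl
        · left; omega
        · right
          rw [show w = (w-5)+5 by omega]
          exact sh_mem_of hye
      by_cases hx4 : x ≤ 4 <;> by_cases hy4 : y ≤ 4
      · -- both old : must be {3,4}
        have hpair : ({x,y} : Finset ℕ) = {3,4} := by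
          have h1 := hx.1
          have h2 := hy.1
          interval_cases x <;> interval_cases y <;>
            first
            | rfl
            | (exact Finset.pair_comm 4 3)
            | (exact absurd rfl hxy)
            | (exact absurd (by decide) (hunc _ hT123))
            | (exact absurd (by decide) (hunc _ hT124))
        rw [hU, hpair]
        exact Finset.mem_insert_self _ _
      · exfalso
        obtain ⟨t, ht, hsub'⟩ := covered_mix x y hx.1 hx4 (by omega) hy.2
        exact hunc t ht hsub'
      · exfalso
        obtain ⟨t, ht, hsub'⟩ := covered_mix y x hy.1 hy4 (by omega) hx.2
        rw [Finset.pair_comm y x] at hsub'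
        exact hunc t ht hsub'
      · -- both new
        have hv : x - 5 < 6*k := by omega
        have hw : y - 5 < 6*k := by omega
        have hvw : x - 5 ≠ y - 5 := by omega
        rcases S.cover (x-5) hv (y-5) hw hvw with ⟨i, e, he, hve, hwe⟩ | ⟨t₀, ht₀, hvt, hwt⟩
        · by_cases hi4 : i = 4
          · subst hi4
            have hsub2 : ({x-5, y-5} : Finset ℕ) ⊆ e := by
              intro z hz
              simp only [Finset.mem_insert, Finset.mem_singleton] at hz
              rcases hz with rfl | rfl
              · exact hve
              · exact hwe
            have hcard2' : ({x-5,y-5} : Finset ℕ).card = 2 := Finset.card_pair hvw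
            have hee : ({x-5,y-5} : Finset ℕ) = e :=
              Finset.eq_of_subset_of_card_le hsub2 (by rw [(S.match_mem 4 e he).2, hcard2'])
            rw [hU, Finset.mem_insert]
            right
            rw [Finset.mem_image]
            refine ⟨e, he, ?_⟩
            rw [← hee]
            ext w
            rw [sh, Finset.mem_image]
            simp only [Finset.mem_insert, Finset.mem_singleton]
            constructor
            · rintro ⟨q, hq, rfl⟩
              rcases hq with rfl | rfl
              · left; omega
              · right; omega
            · rintro (h | h)
              · exact ⟨x-5, Or.inl rfl, by omega⟩
              · exact ⟨y-5, Or.inr rfl, by omega⟩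
          · exfalso
            apply hunc _ (hTAmem i hi4 e he)
            intro w hw'
            simp only [Finset.mem_insert, Finset.mem_singleton] at hw'
            rw [Finset.mem_insert]
            right
            rcases hw' with rfl | rfl
            · rw [show w = (w-5)+5 by omega]; exact sh_mem_of hve
            · rw [show w = (w-5)+5 by omega]; exact sh_mem_of hwe
        · exfalso
          apply hunc _ (hTDmem t₀ ht₀)
          intro w hw'
          simp only [Finset.mem_insert, Finset.mem_singleton] at hw'
          rcases hw' with rfl | rfl
          · rw [show w = (w-5)+5 by omega]; exact sh_mem_of hvt
          · rw [show w = (w-5)+5 by omega]; exact sh_mem_of hwt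
    · intro hp
      rw [hU, Finset.mem_insert, Finset.mem_image] at hp
      rcases hp with rfl | ⟨e, he, rfl⟩
      · refine ⟨⟨?_, by decide⟩, ?_⟩
        · intro w hw
          simp only [Finset.mem_insert, Finset.mem_singleton] at hw
          rw [Finset.mem_Icc]
          rcases hw with rfl | rfl <;> omega
        · intro t ht hsub'
          rcases hTelim t ht with rfl | rfl | ⟨i, hi, e, he, rfl⟩ | ⟨t₀, ht₀, rfl⟩
          · have h4 := hsub' (show (4:ℕ) ∈ {3,4} by decide)
            revert h4; decide
          · have h3 := hsub' (show (3:ℕ) ∈ {3,4} by decide)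
            revert h3; decide
          · have h3 := hsub' (show (3:ℕ) ∈ {3,4} by decide)
            have h4 := hsub' (show (4:ℕ) ∈ {3,4} by decide)
            rw [Finset.mem_insert] at h3 h4
            rcases h3 with h3 | h3
            · rcases h4 with h4 | h4
              · omega
              · have := sh_ge5 h4; omega
            · have := sh_ge5 h3; omega
          · have h3 := hsub' (show (3:ℕ) ∈ {3,4} by decide)
            have := sh_ge5 h3; omega
      · refine ⟨⟨?_, by rw [sh_card]; exact (S.match_mem 4 e he).2⟩, ?_⟩
        · intro w hw
          rw [Finset.mem_Icc]
          have := hMsub 4 e he w hw; omega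
        · intro t ht hsub'
          obtain ⟨p₀, hp₀⟩ := hMne 4 e he
          rcases hTelim t ht with rfl | rfl | ⟨i, hi, f, hf, rfl⟩ | ⟨t₀, ht₀, rfl⟩
          · have := hsub' (sh_mem_of hp₀)
            simp only [Finset.mem_insert, Finset.mem_singleton] at this
            omega
          · have := hsub' (sh_mem_of hp₀)
            simp only [Finset.mem_insert, Finset.mem_singleton] at this
            omega
          · have hef : e ⊆ f := by
              intro q hq
              have hq5 := hsub' (sh_mem_of hq)
              rw [Finset.mem_insert] at hq5
              rcases hq5 with hq5 | hq5
              · have := hval4 i hi; omega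
              · exact sh_strip hq5
            have : e = f := Finset.eq_of_subset_of_card_le hef
              (by rw [(S.match_mem i f hf).2, (S.match_mem 4 e he).2])
            rw [this] at he
            exact (S.purity f he).2 i hi hf
          · exact (S.purity e he).1 t₀ ht₀ (sh_subset hsub')
  -- ======= cardinality of U =======
  have cardU : U.card = 3*k + 1 := by
    rw [hU, Finset.card_insert_of_notMem, Finset.card_image_of_injOn
      (fun e₁ _ e₂ _ h => sh_injective h), S.match_card 4]
    intro hmem
    rw [Finset.mem_image] at hmem
    obtain ⟨e, he, heq⟩ := hmem
    have h3 : (3:ℕ) ∈ sh e := by rw [heq]; decide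
    have := sh_ge5 h3
    omega
  -- ======= final arithmetic =======
  refine ⟨T, claim1, ?_, ?_, ?_⟩
  · rw [cardT]
    obtain ⟨j, rfl⟩ : ∃ j, k = j+1 := ⟨k-1, by omega⟩
    obtain ⟨A, hA⟩ : ∃ A, a^2 = A := ⟨_, rfl⟩
    obtain ⟨B, hB⟩ : ∃ B, j*j = B := ⟨_, rfl⟩
    have h2 : A = 36*B + 120*j + 100 := by rw [← hA, ← hB, ha]; ring
    rw [hA]
    have h4 : 6*(j+1)*((j+1)-1) = 6*B + 6*j := by
      rw [show (j+1)-1 = j by omega, ← hB]; ring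
    rw [h4]
    omega
  · rw [hUeq, cardU]; omega
  · intro p hp q hq hpq
    rw [hUeq, hU, Finset.mem_insert, Finset.mem_image] at hp hq
    rcases hp with rfl | ⟨e, he, rfl⟩ <;> rcases hq with hq | ⟨f, hf, hfq⟩
    · exact absurd hq.symm hpq
    · rw [← hfq, Finset.disjoint_left]
      intro w hw hw'
      have := sh_ge5 hw'
      simp only [Finset.mem_insert, Finset.mem_singleton] at hw
      omega
    · rw [hq, Finset.disjoint_left]
      intro w hw hw'
      have := sh_ge5 hw
      simp only [Finset.mem_insert, Finset.mem_singleton] at hw'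
      omega
    · rw [← hfq] at hpq ⊢
      have hef : e ≠ f := fun hcon => hpq (by rw [hcon])
      have hd := S.match_disj 4 e he f hf hef
      rw [Finset.disjoint_left] at hd ⊢
      intro w hw hw'
      rw [sh, Finset.mem_image] at hw hw'
      obtain ⟨p₁, hp₁, rfl⟩ := hw
      obtain ⟨p₂, hp₂, hp₂e⟩ := hw'
      have : p₂ = p₁ := by omega
      rw [this] at hp₂
      exact hd hp₁ hp₂

end Packing46

theorem packing_4_mod_6 (a : ℕ) (ha : a % 6 = 4) :
    ∃ T : Finset (Finset ℕ), IsTripleFamily (Finset.Icc 1 a) T ∧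
      T.card = (a ^ 2 - 2 * a + 4) / 6 ∧
      (uncoveredPairs (Finset.Icc 1 a) T).card = (a - 2) / 2 ∧
      ∀ p ∈ uncoveredPairs (Finset.Icc 1 a) T, ∀ q ∈ uncoveredPairs (Finset.Icc 1 a) T,
        p ≠ q → Disjoint p q := by
  obtain ⟨k, rfl⟩ : ∃ k, a = 6*k+4 := ⟨(a-4)/6, by omega⟩
  rcases Nat.eq_zero_or_pos k with rfl | hk
  · refine ⟨{{1,2,3},{1,2,4}}, ?_, by decide, by decide, by decide⟩
    intro t ht
    fin_cases ht <;> exact ⟨by decide, by decide⟩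
  · exact Packing46.assemble hk (Packing46.goodD_all k hk)
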